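/- Let K ⊂ ℝ³ be a centrally symmetric convex body equipartitioned by the standard orthonormal basis, and let R = max_{a ∈ K} ‖a‖₁. Then for every octant ω ∈ {−1,1}³, there exists a point a ∈ K(ω) (the intersection of K with the ω-octant) with ‖a‖₁ ≥ R^{1/3}. -/

import Mathlib

open MeasureTheory
open scoped RealInnerProductSpace

namespace EquipartAux

open Set
open scoped Pointwise

local notation "E3" => EuclideanSpace ℝ (Fin 3)

/-- Standard corner simplex. -/
def Dl : Set E3 := {x | (∀ i, 0 ≤ x i) ∧ ∑ i, x i ≤ 1}

noncomputable def lmap (v w u : E3) : E3 →ₗ[ℝ] E3 where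
  toFun x := x 0 • v + x 1 • w + x 2 • u
  map_add' x y := by
    simp only [PiLp.add_apply, add_smul]; abel
  map_smul' c x := by
    simp only [PiLp.smul_apply, smul_eq_mul, RingHom.id_apply, smul_smul, smul_add]

lemma lmap_apply (v w u : E3) (x : E3) : lmap v w u x = x 0 • v + x 1 • w + x 2 • u := rfl

lemma det_lmap (v w u : E3) : LinearMap.det (lmap v w u) =
    Matrix.det (Matrix.of ![![v 0, w 0, u 0], ![v 1, w 1, u 1], ![v 2, w 2, u 2]]) := by
  classical
  rw [← LinearMap.det_toMatrix ((EuclideanSpace.basisFun (Fin 3) ℝ).toBasis)]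
  congr 1
  ext i j
  rw [LinearMap.toMatrix_apply]
  fin_cases i <;> fin_cases j <;>
    simp [lmap_apply, Matrix.of_apply, EuclideanSpace.basisFun_apply, EuclideanSpace.single_apply]

lemma isClosed_Dl : IsClosed Dl := by
  have h1 : IsClosed {x : E3 | ∀ i, 0 ≤ x i} := by
    have : {x : E3 | ∀ i, 0 ≤ x i} = ⋂ i, {x : E3 | 0 ≤ x i} := by ext x; simp
    rw [this]
    exact isClosed_iInter fun i => isClosed_le continuous_const (PiLp.continuous_apply 2 (fun _ : Fin 3 => ℝ) i)
  have h2 : IsClosed {x : E3 | ∑ i, x i ≤ 1} :=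
    isClosed_le (continuous_finset_sum _ fun i _ => PiLp.continuous_apply 2 (fun _ : Fin 3 => ℝ) i) continuous_const
  exact (h1.inter h2 : _)

lemma Dl_subset_ball : Dl ⊆ Metric.closedBall 0 3 := by
  intro x ⟨h0, h1⟩
  rw [Metric.mem_closedBall, dist_zero_right]
  have hle : ∀ i, x i ≤ 1 := by
    intro i
    calc x i ≤ ∑ j, x j := Finset.single_le_sum (fun j _ => h0 j) (Finset.mem_univ i)
    _ ≤ 1 := h1
  rw [EuclideanSpace.norm_eq]
  have h3 : ∑ i, ‖x i‖ ^ 2 ≤ 3 := by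
    calc ∑ i, ‖x i‖ ^ 2 ≤ ∑ i : Fin 3, (1:ℝ) := Finset.sum_le_sum fun i _ => by
          rw [Real.norm_eq_abs, abs_of_nonneg (h0 i), sq_le_one_iff_abs_le_one,
            abs_of_nonneg (h0 i)]; exact hle i
    _ = 3 := by norm_num
  calc Real.sqrt (∑ i, ‖x i‖ ^ 2) ≤ Real.sqrt 3 := Real.sqrt_le_sqrt h3
  _ ≤ 3 := by nlinarith [Real.sq_sqrt (by norm_num : (0:ℝ) ≤ 3), Real.sqrt_nonneg 3]

lemma isCompact_Dl : IsCompact Dl :=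
  Metric.isCompact_of_isClosed_isBounded isClosed_Dl
    (Metric.isBounded_closedBall.subset Dl_subset_ball)

lemma Dl_pos : volume Dl ≠ 0 := by
  have hV : IsOpen {x : E3 | ∀ i, x i ∈ Set.Ioo (0:ℝ) (1/4)} := by
    have : {x : E3 | ∀ i, x i ∈ Set.Ioo (0:ℝ) (1/4)}
        = ⋂ i, (fun x : E3 => x i) ⁻¹' (Set.Ioo 0 (1/4)) := by ext x; simp
    rw [this]
    exact isOpen_iInter_of_finite fun i => (isOpen_Ioo).preimage (PiLp.continuous_apply 2 (fun _ : Fin 3 => ℝ) i)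
  have hsub : {x : E3 | ∀ i, x i ∈ Set.Ioo (0:ℝ) (1/4)} ⊆ Dl := by
    intro x hx
    refine ⟨fun i => (hx i).1.le, ?_⟩
    calc ∑ i, x i ≤ ∑ i : Fin 3, (1/4:ℝ) := Finset.sum_le_sum fun i _ => (hx i).2.le
    _ ≤ 1 := by norm_num
  have hne : {x : E3 | ∀ i, x i ∈ Set.Ioo (0:ℝ) (1/4)}.Nonempty := by
    refine ⟨(EuclideanSpace.equiv (Fin 3) ℝ).symm 
(fun _ => 1/8), fun i => ?_⟩
    norm_num [EuclideanSpace.equiv]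
  exact fun h => (hV.measure_pos volume hne).ne' (measure_mono_null hsub h)

lemma Dl_ne_top : volume Dl ≠ ⊤ := isCompact_Dl.measure_lt_top.ne

lemma smul_Dl (M : ℝ) (hM : 0 < M) :
    {x : E3 | (∀ i, 0 ≤ x i) ∧ ∑ i, x i ≤ M} = M • Dl := by
  ext x
  constructor
  · rintro ⟨hx0, hx1⟩
    refine ⟨M⁻¹ • x, ⟨fun i => ?_, ?_⟩, by simp [smul_smul, mul_inv_cancel₀ hM.ne']⟩
    · simp only [PiLp.smul_apply, smul_eq_mul]
      exact mul_nonneg (inv_nonneg.mpr hM.le) (hx0 i)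
    · simp only [PiLp.smul_apply, smul_eq_mul, ← Finset.mul_sum]
      rw [inv_mul_le_iff₀ hM, mul_one]; exact hx1
  · rintro ⟨y, ⟨hy0, hy1⟩, rfl⟩
    constructor
    · intro i; simp only [PiLp.smul_apply, smul_eq_mul]
      exact mul_nonneg hM.le (hy0 i)
    · simp only [PiLp.smul_apply, smul_eq_mul, ← Finset.mul_sum]
      calc M * ∑ i, y i ≤ M * 1 := by nlinarith
      _ = M := mul_one M

lemma vol_MDl (M : ℝ) (hM : 0 < M) :
    volume {x : E3 | (∀ i, 0 ≤ x i) ∧ ∑ i, x i ≤ M}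
      = ENNReal.ofReal (M ^ 3) * volume Dl := by
  rw [smul_Dl M hM, Measure.addHaar_smul]
  norm_num [finrank_euclideanSpace, abs_of_pos hM]

lemma span_null (q a : E3) : volume (Submodule.span ℝ {q, a} : Set E3) = 0 := by
  classical
  apply Measure.addHaar_submodule
  apply ne_top_of_lt
  apply span_lt_top_of_card_lt_finrank
  rw [finrank_euclideanSpace]
  simp only [Fintype.card_fin]
  calc ({q, a} : Set E3).toFinset.card ≤ ({q, a} : Finset E3).card := by
        rw [Set.toFinset_insert, Set.toFinset_singleton]
  _ ≤ 2 := Finset.card_insert_le _ _ |>.trans (by simp)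
  _ < 3 := by norm_num

lemma coord_null (i : Fin 3) : volume {x : E3 | x i = 0} = 0 := by
  have h : {x : E3 | x i = 0}
      = ((LinearMap.ker (EuclideanSpace.projₗ i) :
          Submodule ℝ (EuclideanSpace ℝ (Fin 3))) : Set E3) := by
    ext x; simp [LinearMap.mem_ker]
  rw [h]
  apply Measure.addHaar_submodule
  intro htop
  have : EuclideanSpace.single i (1:ℝ) ∈ LinearMap.ker (EuclideanSpace.projₗ i) :=
    htop ▸ Submodule.mem_top
  simp [LinearMap.mem_ker] at this

/-- Simplex with vertices `0, p, q, a`. -/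
def splx (p q a : E3) : Set E3 :=
  {x | ∃ α β γ : ℝ, 0 ≤ α ∧ 0 ≤ β ∧ 0 ≤ γ ∧ α + β + γ ≤ 1 ∧ x = α • p + β • q + γ • a}

lemma splx_eq_image (p q a : E3) : splx p q a = lmap p q a '' Dl := by
  ext x
  constructor
  · rintro ⟨α, β, γ, hα, hβ, hγ, hs, rfl⟩
    refine ⟨(WithLp.equiv 2 (Fin 3 → ℝ)).symm ![α, β, γ], ⟨fun i => ?_, ?_⟩, ?_⟩
    · fin_cases i <;> simpa using by assumption
    · simpa [Fin.sum_univ_three] using hs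
    · simp [lmap_apply]
  · rintro ⟨y, ⟨hy0, hy1⟩, rfl⟩
    exact ⟨y 0, y 1, y 2, hy0 0, hy0 1, hy0 2, by simpa [Fin.sum_univ_three] using hy1, rfl⟩

lemma splx_subset {C : Set E3} (hC : Convex ℝ C) {p q a : E3}
    (h0 : (0:E3) ∈ C) (hp : p ∈ C) (hq : q ∈ C) (ha : a ∈ C) :
    splx p q a ⊆ C := by
  rintro x ⟨α, β, γ, hα, hβ, hγ, hs, rfl⟩
  have := hC.sum_mem (t := Finset.univ) (w := ![1 - (α+β+γ), α, β, γ])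
    (z := ![0, p, q, a])
    (by intro i _; fin_cases i <;> simp <;> linarith)
    (by simp [Fin.sum_univ_four]; ring)
    (by intro i _; fin_cases i <;> simpa)
  simpa [Fin.sum_univ_four] using this

lemma vol_splx (p q a : E3) :
    volume (splx p q a) = ENNReal.ofReal |LinearMap.det (lmap p q a)| * volume Dl := by
  rw [splx_eq_image]
  exact Measure.addHaar_image_linearMap _ _ _

lemma isCompact_splx (p q a : E3) : IsCompact (splx p q a) := by
  rw [splx_eq_image]
  exact isCompact_Dl.image (lmap p q a).continuous_of_finiteDimensional

/-- sign of an octant -/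
def sgn (τ : Fin 3 → Bool) (i : Fin 3) : ℝ := if τ i then 1 else -1

lemma sgn_mul_self (τ : Fin 3 → Bool) (i : Fin 3) : sgn τ i * sgn τ i = 1 := by
  by_cases h : τ i <;> simp [sgn, h]

lemma abs_sgn (τ : Fin 3 → Bool) (i : Fin 3) : |sgn τ i| = 1 := by
  by_cases h : τ i <;> simp [sgn, h]

lemma sgn_ne_zero (τ : Fin 3 → Bool) (i : Fin 3) : sgn τ i ≠ 0 := by
  by_cases h : τ i <;> simp [sgn, h]

/-- signed basis vector -/
noncomputable def sgv (τ : Fin 3 → Bool) (i : Fin 3) : E3 :=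
  sgn τ i • EuclideanSpace.single i 1

lemma sgv_apply (τ : Fin 3 → Bool) (i j : Fin 3) :
    sgv τ i j = sgn τ i * (if j = i then 1 else 0) := by
  simp [sgv, PiLp.smul_apply, EuclideanSpace.single_apply, smul_eq_mul]

/-- octant -/
def Oct (τ : Fin 3 → Bool) : Set E3 := {x | ∀ i, 0 ≤ sgn τ i * x i}

lemma convex_Oct (τ : Fin 3 → Bool) : Convex ℝ (Oct τ) := by
  intro x hx y hy p q hp hq hpq i
  have h1 := hx i
  have h2 := hy i
  simp only [PiLp.add_apply, PiLp.smul_apply, smul_eq_mul]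
  nlinarith

lemma isClosed_Oct (τ : Fin 3 → Bool) : IsClosed (Oct τ) := by
  have : Oct τ = ⋂ i, {x : E3 | 0 ≤ sgn τ i * x i} := by ext x; simp [Oct]
  rw [this]
  exact isClosed_iInter fun i =>
    isClosed_le continuous_const (continuous_const.mul (PiLp.continuous_apply 2 (fun _ : Fin 3 => ℝ) i))

lemma sgv_mem_Oct (τ : Fin 3 → Bool) (i : Fin 3) : sgv τ i ∈ Oct τ := by
  intro j
  rw [sgv_apply]
  by_cases h : j = i
  · subst h; rw [if_pos rfl, mul_one, sgn_mul_self]; norm_num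
  · rw [if_neg h]; simp

lemma zero_mem_Oct (τ : Fin 3 → Bool) : (0:E3) ∈ Oct τ := by
  intro j; simp

lemma l1_sgv (τ : Fin 3 → Bool) (i : Fin 3) : ∑ j, |sgv τ i j| = 1 := by
  have : ∀ j, |sgv τ i j| = if j = i then 1 else 0 := by
    intro j
    rw [sgv_apply, abs_mul, abs_sgn, one_mul]
    by_cases h : j = i <;> simp [h]
  rw [Finset.sum_congr rfl fun j _ => this j]
  simp

lemma abs_det_sgv01 (τ : Fin 3 → Bool) (a : E3) :
    |LinearMap.det (lmap (sgv τ 0) (sgv τ 1) a)| = |a 2| := by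
  rw [det_lmap]
  simp only [sgv_apply, Matrix.det_fin_three, Matrix.of_apply]
  norm_num
  simp only [Fin.isValue, show ((2:Fin 3) = 1) ↔ False from by decide,
    show ((2:Fin 3) = 0) ↔ False from by decide, show ((0:Fin 3) = 2) ↔ False from by decide,
    show ((1:Fin 3) = 2) ↔ False from by decide, if_false]
  ring_nf
  simp [abs_mul, abs_sgn]

lemma abs_det_sgv12 (τ : Fin 3 → Bool) (a : E3) :
    |LinearMap.det (lmap (sgv τ 1) (sgv τ 2) a)| = |a 0| := by
  rw [det_lmap]
  simp only [sgv_apply, Matrix.det_fin_three, Matrix.of_apply]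
  norm_num
  simp only [Fin.isValue, show ((2:Fin 3) = 1) ↔ False from by decide,
    show ((2:Fin 3) = 0) ↔ False from by decide, show ((0:Fin 3) = 2) ↔ False from by decide,
    show ((1:Fin 3) = 2) ↔ False from by decide, if_false]
  ring_nf
  simp [abs_mul, abs_sgn]

lemma abs_det_sgv20 (τ : Fin 3 → Bool) (a : E3) :
    |LinearMap.det (lmap (sgv τ 2) (sgv τ 0) a)| = |a 1| := by
  rw [det_lmap]
  simp only [sgv_apply, Matrix.det_fin_three, Matrix.of_apply]
  norm_num
  simp only [Fin.isValue, show ((2:Fin 3) = 1) ↔ False from by decide,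
    show ((2:Fin 3) = 0) ↔ False from by decide, show ((0:Fin 3) = 2) ↔ False from by decide,
    show ((1:Fin 3) = 2) ↔ False from by decide, if_false]
  ring_nf
  simp [abs_mul, abs_sgn]

lemma abs_det_sgv_diag (τ : Fin 3 → Bool) :
    |LinearMap.det (lmap (sgv τ 0) (sgv τ 1) (sgv τ 2))| = 1 := by
  rw [det_lmap]
  simp only [sgv_apply, Matrix.det_fin_three, Matrix.of_apply]
  norm_num
  simp only [Fin.isValue, show ((2:Fin 3) = 1) ↔ False from by decide,
    show ((2:Fin 3) = 0) ↔ False from by decide, show ((0:Fin 3) = 2) ↔ False from by decide,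
    show ((1:Fin 3) = 2) ↔ False from by decide, if_false]
  ring_nf
  simp [abs_mul, abs_sgn]

/-- the key almost-disjointness of the three simplices -/
lemma splx_inter_null (τ : Fin 3 → Bool) (a : E3) (ha : a ∈ Oct τ)
    (i j k : Fin 3) (hij : i ≠ j) (hjk : j ≠ k) (hik : i ≠ k) :
    volume (splx (sgv τ i) (sgv τ j) a ∩ splx (sgv τ j) (sgv τ k) a) = 0 := by
  have hsub : splx (sgv τ i) (sgv τ j) a ∩ splx (sgv τ j) (sgv τ k) a ⊆
      {x : E3 | x i = 0} ∪ {x : E3 | x k = 0} ∪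
        (Submodule.span ℝ {sgv τ j, a} : Set E3) := by
    rintro x ⟨⟨α, β, γ, hα, hβ, hγ, h1, rfl⟩, α', β', γ', hα', hβ', hγ', h2, hx⟩
    have Ei := congrArg (fun z : E3 => z i) hx
    have Ek := congrArg (fun z : E3 => z k) hx
    simp only [PiLp.add_apply, PiLp.smul_apply, smul_eq_mul, sgv_apply,
      hij, hjk, hik, Ne.symm hij, Ne.symm hjk, Ne.symm hik, eq_self_iff_true,
      if_true, if_false, mul_one, mul_zero, add_zero, zero_add] at Ei Ek
    -- Ei : α * sgn τ i + γ * a i = γ' * a i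
    -- Ek : γ * a k = β' * sgn τ k + γ' * a k
    by_cases hai : a i = 0
    · left; left
      show (α • sgv τ i + β • sgv τ j + γ • a : E3) i = 0
      simp only [PiLp.add_apply, PiLp.smul_apply, smul_eq_mul, sgv_apply,
        hij, Ne.symm hij, eq_self_iff_true, if_true, if_false, mul_one,
        mul_zero, add_zero, zero_add]
      rw [hai] at Ei ⊢
      linarith
    · by_cases hak : a k = 0
      · left; right
        show (α • sgv τ i + β • sgv τ j + γ • a : E3) k = 0
        simp only [PiLp.add_apply, PiLp.smul_apply, smul_eq_mul, sgv_apply,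
          hik, hjk, Ne.symm hik, Ne.symm hjk, if_false, mul_one,
          mul_zero, add_zero, zero_add]
        rw [hak, mul_zero]
      · have hbi : 0 < sgn τ i * a i :=
          lt_of_le_of_ne (ha i) (Ne.symm (mul_ne_zero (sgn_ne_zero τ i) hai))
        have hbk : 0 < sgn τ k * a k :=
          lt_of_le_of_ne (ha k) (Ne.symm (mul_ne_zero (sgn_ne_zero τ k) hak))
        have hsi := sgn_mul_self τ i
        have hsk := sgn_mul_self τ k
        have hA : α = (γ' - γ) * (sgn τ i * a i) := by
          linear_combination sgn τ i * Ei - α * hsi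
        have hB : β' = (γ - γ') * (sgn τ k * a k) := by
          linear_combination - (sgn τ k * Ek) - β' * hsk
        have hγγ : γ = γ' := by
          have hle1 : γ ≤ γ' := by nlinarith
          have hle2 : γ' ≤ γ := by nlinarith
          linarith
        have hα0 : α = 0 := by rw [hA, hγγ]; ring
        right
        rw [hα0, zero_smul, zero_add]
        exact Submodule.add_mem _
          (Submodule.smul_mem _ _ (Submodule.subset_span (Set.mem_insert _ _)))
          (Submodule.smul_mem _ _ (Submodule.subset_span (Set.mem_insert_of_mem _ rfl)))
  refine measure_mono_null hsub ?_
  refine measure_union_null (measure_union_null (coord_null i) (coord_null k)) ?_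
  exact span_null _ _

lemma subset_sgn_image (τ : Fin 3 → Bool) (M : ℝ) (S : Set E3) (hS : S ⊆ Oct τ)
    (hM : ∀ x ∈ S, ∑ i, |x i| ≤ M) :
    S ⊆ lmap (sgv τ 0) (sgv τ 1) (sgv τ 2) ''
      {x : E3 | (∀ i, 0 ≤ x i) ∧ ∑ i, x i ≤ M} := by
  intro x hx
  refine ⟨(WithLp.equiv 2 (Fin 3 → ℝ)).symm (fun i => sgn τ i * x i), ⟨fun i => ?_, ?_⟩, ?_⟩
  · simpa using hS hx i
  · have habs : ∀ i, sgn τ i * x i = |x i| := fun i => by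
      have h0 := hS hx i
      have h1 : |sgn τ i * x i| = sgn τ i * x i := abs_of_nonneg h0
      rw [abs_mul, abs_sgn, one_mul] at h1
      exact h1.symm
    have : ∑ i, ((WithLp.equiv 2 (Fin 3 → ℝ)).symm (fun i => sgn τ i * x i)) i
        = ∑ i, |x i| := by
      refine Finset.sum_congr rfl fun i _ => ?_
      rw [WithLp.equiv_symm_apply, PiLp.toLp_apply]
      exact habs i
    rw [this]
    exact hM x hx
  · ext n
    simp only [lmap_apply, PiLp.add_apply, PiLp.smul_apply, smul_eq_mul, sgv_apply,
      WithLp.equiv_symm_apply, PiLp.toLp_apply]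
    fin_cases n
    · simp
      linear_combination (x 0) * sgn_mul_self τ 0
    · simp
      linear_combination (x 1) * sgn_mul_self τ 1
    · simp
      linear_combination (x 2) * sgn_mul_self τ 2

end EquipartAux

open EquipartAux Set

/-- If `K ⊂ ℝ³` is a symmetric convex body equipartitioned by the standard orthonormal basis
and `R = max_{a ∈ K} ‖a‖₁`, then every octant of `K` contains a point of `ℓ¹`-norm at least
`R^(1/3)`. -/
theorem equipartitioned_octant_l1_bound (K : Set (EuclideanSpace ℝ (Fin 3)))
    (hKcomp : IsCompact K) (hKconv : Convex ℝ K) (hKsymm : K = -K)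
    (hKint : (interior K).Nonempty)
    (he : ∀ i : Fin 3, EuclideanSpace.single i (1 : ℝ) ∈ frontier K)
    (hoct : ∀ σ : Fin 3 → Bool,
      volume (K ∩ {x | ∀ i, 0 ≤ (if σ i then (1 : ℝ) else -1) * x i}) = volume K / 8)
    (hsec : ∀ i : Fin 3, ∀ σ : Fin 3 → Bool,
      μH[2] (K ∩ {x | x i = 0} ∩
          {x | ∀ j, j ≠ i → 0 ≤ (if σ j then (1 : ℝ) else -1) * x j}) =
        μH[2] (K ∩ {x | x i = 0}) / 4)
    (R : ℝ) (hRmem : ∃ a ∈ K, ∑ i, |a i| = R) (hRub : ∀ a ∈ K, ∑ i, |a i| ≤ R) :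
    ∀ σ : Fin 3 → Bool, ∃ a ∈ K,
      (∀ i, 0 ≤ (if σ i then (1 : ℝ) else -1) * a i) ∧
      R ^ ((1 : ℝ) / 3) ≤ ∑ i, |a i| := by
  classical
  intro σ
  have hKclosed : IsClosed K := hKcomp.isClosed
  have heK : ∀ i, EuclideanSpace.single i (1:ℝ) ∈ K := fun i => hKclosed.frontier_subset (he i)
  have hvK : ∀ (τ : Fin 3 → Bool) (i : Fin 3), sgv τ i ∈ K := by
    intro τ i
    by_cases h : τ i
    · simpa [sgv, sgn, h] using heK i
    · have hneg : -EuclideanSpace.single i (1:ℝ) ∈ K := by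
        rw [hKsymm, Set.mem_neg, neg_neg]; exact heK i
      simpa [sgv, sgn, h] using hneg
  have h0K : (0 : EuclideanSpace ℝ (Fin 3)) ∈ K := by
    have hmem : -EuclideanSpace.single 0 (1:ℝ) ∈ K := by
      rw [hKsymm, Set.mem_neg, neg_neg]; exact heK 0
    have h2 := hKconv (heK 0) hmem (by norm_num : (0:ℝ) ≤ 1/2)
      (by norm_num : (0:ℝ) ≤ 1/2) (by norm_num)
    simpa [← sub_eq_add_neg, smul_sub, sub_self] using h2
  have hoct' : ∀ τ : Fin 3 → Bool, volume (K ∩ Oct τ) = volume K / 8 := fun τ => hoct τ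
  -- maximizer of the ℓ¹ norm over the octant piece `K ∩ Oct σ`
  have hcont : Continuous (fun x : EuclideanSpace ℝ (Fin 3) => ∑ i, |x i|) :=
    continuous_finset_sum _ fun i _ => (PiLp.continuous_apply 2 (fun _ : Fin 3 => ℝ) i).abs
  have hKOcomp : IsCompact (K ∩ Oct σ) := hKcomp.inter_right (isClosed_Oct σ)
  have hKOne : (K ∩ Oct σ).Nonempty := ⟨0, h0K, zero_mem_Oct σ⟩
  obtain ⟨m, hmKO, hmax⟩ := hKOcomp.exists_isMaxOn hKOne hcont.continuousOn
  set M := ∑ i, |m i| with hM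
  have hM1 : (1:ℝ) ≤ M := by
    have h : (∑ i, |sgv σ 0 i|) ≤ M := hmax ⟨hvK σ 0, sgv_mem_Oct σ 0⟩
    rwa [l1_sgv] at h
  -- upper bound
  have hupper : volume (K ∩ Oct σ) ≤ ENNReal.ofReal (M ^ 3) * volume Dl := by
    calc volume (K ∩ Oct σ)
        ≤ volume (lmap (sgv σ 0) (sgv σ 1) (sgv σ 2) ''
            {x : EuclideanSpace ℝ (Fin 3) | (∀ i, 0 ≤ x i) ∧ ∑ i, x i ≤ M}) :=
          measure_mono (subset_sgn_image σ M _ (fun x hx => hx.2) (fun x hx => hmax hx))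
      _ = ENNReal.ofReal |LinearMap.det (lmap (sgv σ 0) (sgv σ 1) (sgv σ 2))| *
            volume {x : EuclideanSpace ℝ (Fin 3) | (∀ i, 0 ≤ x i) ∧ ∑ i, x i ≤ M} :=
          Measure.addHaar_image_linearMap _ _ _
      _ = ENNReal.ofReal (M ^ 3) * volume Dl := by
          rw [abs_det_sgv_diag, vol_MDl M (by linarith), ENNReal.ofReal_one, one_mul]
  -- the octant containing the point realizing R
  obtain ⟨a, haK, haR⟩ := hRmem
  set τ := fun i => decide (0 ≤ a i) with hτ
  have haOct : a ∈ Oct τ := by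
    intro i
    simp only [sgn, hτ, decide_eq_true_eq]
    by_cases h : 0 ≤ a i
    · rw [if_pos h, one_mul]; exact h
    · rw [if_neg h]
      push_neg at h
      nlinarith
  have hsum : volume (splx (sgv τ 0) (sgv τ 1) a) + volume (splx (sgv τ 1) (sgv τ 2) a)
      + volume (splx (sgv τ 2) (sgv τ 0) a) = ENNReal.ofReal R * volume Dl := by
    rw [vol_splx, vol_splx, vol_splx, abs_det_sgv01, abs_det_sgv12, abs_det_sgv20,
      ← add_mul, ← add_mul, ← ENNReal.ofReal_add (abs_nonneg _) (abs_nonneg _),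
      ← ENNReal.ofReal_add (by positivity) (abs_nonneg _)]
    congr 2
    rw [← haR, Fin.sum_univ_three]
    ring
  have hd12 : AEDisjoint volume (splx (sgv τ 0) (sgv τ 1) a) (splx (sgv τ 1) (sgv τ 2) a) :=
    splx_inter_null τ a haOct 0 1 2 (by decide) (by decide) (by decide)
  have hd23 : AEDisjoint volume (splx (sgv τ 1) (sgv τ 2) a) (splx (sgv τ 2) (sgv τ 0) a) :=
    splx_inter_null τ a haOct 1 2 0 (by decide) (by decide) (by decide)
  have hd31 : AEDisjoint volume (splx (sgv τ 2) (sgv τ 0) a) (splx (sgv τ 0) (sgv τ 1) a) :=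
    splx_inter_null τ a haOct 2 0 1 (by decide) (by decide) (by decide)
  have hmeas : ∀ p q b, NullMeasurableSet (splx p q b) volume :=
    fun p q b => (isCompact_splx p q b).isClosed.measurableSet.nullMeasurableSet
  have hunion : volume (splx (sgv τ 0) (sgv τ 1) a ∪ splx (sgv τ 1) (sgv τ 2) a
      ∪ splx (sgv τ 2) (sgv τ 0) a) = ENNReal.ofReal R * volume Dl := by
    rw [measure_union₀ (hmeas _ _ _) (AEDisjoint.union_left hd31.symm hd23),
      measure_union₀ (hmeas _ _ _) hd12]
    exact hsum
  have hKOτconv : Convex ℝ (K ∩ Oct τ) := hKconv.inter (convex_Oct τ)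
  have h0KO : (0 : EuclideanSpace ℝ (Fin 3)) ∈ K ∩ Oct τ := ⟨h0K, zero_mem_Oct τ⟩
  have hvKO : ∀ i, sgv τ i ∈ K ∩ Oct τ := fun i => ⟨hvK τ i, sgv_mem_Oct τ i⟩
  have haKO : a ∈ K ∩ Oct τ := ⟨haK, haOct⟩
  have hlower : ENNReal.ofReal R * volume Dl ≤ volume (K ∩ Oct τ) := by
    rw [← hunion]
    refine measure_mono (Set.union_subset (Set.union_subset ?_ ?_) ?_) <;>
      exact splx_subset hKOτconv h0KO (hvKO _) (hvKO _) haKO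
  have hchain : ENNReal.ofReal R * volume Dl ≤ ENNReal.ofReal (M ^ 3) * volume Dl :=
    calc ENNReal.ofReal R * volume Dl ≤ volume (K ∩ Oct τ) := hlower
    _ = volume K / 8 := hoct' τ
    _ = volume (K ∩ Oct σ) := (hoct' σ).symm
    _ ≤ _ := hupper
  have hRM : R ≤ M ^ 3 :=
    (ENNReal.ofReal_le_ofReal_iff (by positivity)).mp
      ((ENNReal.mul_le_mul_iff_left Dl_pos Dl_ne_top).mp hchain)
  refine ⟨m, hmKO.1, fun i => hmKO.2 i, ?_⟩
  have hR0 : (0:ℝ) ≤ R := by rw [← haR]; positivity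
  have hfin : R ^ ((1:ℝ)/3) ≤ M := by
    calc R ^ ((1:ℝ)/3) ≤ (M ^ 3) ^ ((1:ℝ)/3) :=
          Real.rpow_le_rpow hR0 hRM (by norm_num)
    _ = M := by
        rw [← Real.rpow_natCast M 3, ← Real.rpow_mul (by linarith : (0:ℝ) ≤ M)]
        norm_num
  rw [hM] at hfin
  exact hfin
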